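/- Let O_L/O_M be a quadratic extension of Dedekind domains with Gal(L/M) = ⟨σ⟩ of order 2. Define the antitrace ATr(x) = x - σ(x) and A = ATr(O_L). Then for every nonzero ideal I of O_M, the order O_I = O_M + I·O_L satisfies O_I = {x ∈ O_L : ATr(x) ∈ I·A}, and A is a projective O_M-module of rank 1. -/

import Mathlib

open scoped nonZeroDivisors

section Aux

variable {A K : Type} [CommRing A] [IsDedekindDomain A] [Field K] [Algebra A K]
  [IsFractionRing A K]

lemma aux_exists_rep {N N' : Submodule A K} {x : K} (hx : x ∈ N * N') :
    ∃ (n : ℕ) (a b : Fin n → K), (∀ i, a i ∈ N) ∧ (∀ i, b i ∈ N') ∧ ∑ i, a i * b i = x := by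
  refine Submodule.mul_induction_on hx ?_ ?_
  · intro m hm n hn
    exact ⟨1, fun _ => m, fun _ => n, fun _ => hm, fun _ => hn, by simp⟩
  · rintro x y ⟨n, a, b, ha, hb, rfl⟩ ⟨n', a', b', ha', hb', rfl⟩
    refine ⟨n + n', Fin.append a a', Fin.append b b', ?_, ?_, ?_⟩
    · intro i
      induction i using Fin.addCases with
      | left i => simpa [Fin.append_left] using ha i
      | right i => simpa [Fin.append_right] using ha' i
    · intro i
      induction i using Fin.addCases with
      | left i => simpa [Fin.append_left] using hb i
      | right i => simpa [Fin.append_right] using hb' i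
    · rw [Fin.sum_univ_add]
      simp [Fin.append_left, Fin.append_right]

lemma projective_of_fg (N : Submodule A K) (hfg : N.FG) (hne : N ≠ ⊥) :
    Module.Projective A ↥N := by
  have hinj : Function.Injective (algebraMap A K) := IsFractionRing.injective A K
  set J : FractionalIdeal A⁰ K := ⟨N, FractionalIdeal.isFractional_of_fg hfg⟩ with hJdef
  have hJN : (J : Submodule A K) = N := rfl
  have hJ0 : J ≠ 0 := by
    intro h
    apply hne
    rw [← hJN, h, FractionalIdeal.coe_zero]
  have hmul : J * J⁻¹ = 1 := mul_inv_cancel₀ hJ0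
  have h1 : (1 : K) ∈ (N * ((J⁻¹ : FractionalIdeal A⁰ K) : Submodule A K) : Submodule A K) := by
    have h1' : (1 : K) ∈ ((J * J⁻¹ : FractionalIdeal A⁰ K) : Submodule A K) := by
      rw [hmul]
      exact FractionalIdeal.one_mem_one _
    rwa [FractionalIdeal.coe_mul, hJN] at h1'
  obtain ⟨n, a, b, ha, hb, hsum⟩ := aux_exists_rep h1
  have hbx : ∀ (i : Fin n) (x : ↥N), b i * (x : K) ∈ LinearMap.range (Algebra.linearMap A K) := by
    intro i x
    have hmem : b i * (x : K) ∈ ((J⁻¹ * J : FractionalIdeal A⁰ K) : Submodule A K) := by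
      rw [FractionalIdeal.coe_mul, hJN]
      exact Submodule.mul_mem_mul (hb i) x.2
    rw [mul_comm J⁻¹ J, hmul] at hmem
    rwa [FractionalIdeal.coe_one, Submodule.one_eq_range] at hmem
  have hinj' : Function.Injective (Algebra.linearMap A K) := hinj
  set e : A ≃ₗ[A] LinearMap.range (Algebra.linearMap A K) :=
    LinearEquiv.ofInjective (Algebra.linearMap A K) hinj' with he
  have he' : ∀ v : LinearMap.range (Algebra.linearMap A K),
      algebraMap A K (e.symm v) = (v : K) := by
    intro v
    conv_rhs => rw [← e.apply_symm_apply v]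
    rw [he, LinearEquiv.ofInjective_apply]
    rfl
  set s : ↥N →ₗ[A] (Fin n → A) := LinearMap.pi (fun i =>
    e.symm.toLinearMap ∘ₗ LinearMap.codRestrict _
      ((LinearMap.mulLeft A (b i)).comp N.subtype) (fun x => hbx i x)) with hs
  set π : (Fin n → A) →ₗ[A] ↥N :=
    ∑ i, (LinearMap.proj i).smulRight (⟨a i, ha i⟩ : ↥N) with hπ
  refine Module.Projective.of_split s π ?_
  ext x
  rw [LinearMap.comp_apply, LinearMap.id_apply]
  have hπx : ((π (s x) : ↥N) : K) = ∑ i, (s x i) • (a i) := by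
    rw [hπ]
    simp only [LinearMap.coe_sum, Finset.sum_apply, LinearMap.smulRight_apply,
      LinearMap.proj_apply]
    rw [AddSubmonoidClass.coe_finset_sum]
    simp [Submodule.coe_smul]
  have hsx : ∀ i, (s x i : A) • (a i) = b i * (x : K) * a i := by
    intro i
    rw [hs]
    simp only [LinearMap.pi_apply, LinearMap.comp_apply, LinearEquiv.coe_coe]
    rw [Algebra.smul_def, he']
    rfl
  rw [hπx]
  simp only [hsx]
  calc ∑ i, b i * (x : K) * a i = (x : K) * ∑ i, a i * b i := by
        rw [Finset.mul_sum]; exact Finset.sum_congr rfl fun i _ => by ring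
    _ = (x : K) := by rw [hsum, mul_one]

lemma rank_eq_one_of_ne_bot (N : Submodule A K) (hne : N ≠ ⊥) :
    Module.rank A ↥N = 1 := by
  classical
  have hinj : Function.Injective (algebraMap A K) := IsFractionRing.injective A K
  have hnzsd : NoZeroSMulDivisors A K := ⟨fun {c x} h => by
    rw [Algebra.smul_def, mul_eq_zero] at h
    exact h.imp_left (fun h => hinj (by rw [h, map_zero]))⟩
  have hnt : Nontrivial ↥N := Submodule.nontrivial_iff_ne_bot.mpr hne
  refine le_antisymm ?_ (Cardinal.one_le_iff_pos.mpr rank_pos)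
  refine rank_le fun s hs => ?_
  by_contra hcard
  push_neg at hcard
  obtain ⟨u, hu, v, hv, huv⟩ := Finset.one_lt_card.mp hcard
  have hv0 : (v : K) ≠ 0 := by
    have hnz := hs.ne_zero ⟨v, hv⟩
    exact fun h => hnz (Subtype.ext h)
  obtain ⟨⟨r, t⟩, hrt⟩ := IsLocalization.surj A⁰ ((u : K) / (v : K))
  have ht0 : (t : A) ≠ 0 := nonZeroDivisors.coe_ne_zero t
  have hK : algebraMap A K t * (u : K) = algebraMap A K r * (v : K) := by
    field_simp at hrt
    rw [mul_comm] at hrt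
    linear_combination hrt
  set i1 : {x // x ∈ s} := ⟨u, hu⟩
  set i2 : {x // x ∈ s} := ⟨v, hv⟩
  have hne12 : i1 ≠ i2 := by
    intro h
    exact huv (congrArg Subtype.val h)
  have hli := linearIndependent_iff'.mp hs {i1, i2}
    (fun i => if i = i1 then (t : A) else -r)
  have hzero : ∑ i ∈ ({i1, i2} : Finset {x // x ∈ s}),
      (if i = i1 then (t : A) else -r) • (i : ↥N) = 0 := by
    rw [Finset.sum_pair hne12]
    simp only [eq_self_iff_true, if_true, if_neg hne12.symm]
    apply Subtype.ext
    simp only [Submodule.coe_add, SetLike.val_smul, ZeroMemClass.coe_zero]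
    rw [Algebra.smul_def, Algebra.smul_def, map_neg, hK]
    ring
  have := hli hzero i1 (Finset.mem_insert_self _ _)
  rw [if_pos rfl] at this
  exact ht0 this

end Aux




/-- The `A`-submodule `O_I := A + I·O_L` of `L`. -/
def orderOfIdeal (A L : Type) [CommRing A] [CommRing L] [Algebra A L] (I : Ideal A) :
    Submodule A L :=
  Subalgebra.toSubmodule (⊥ : Subalgebra A L) ⊔ I • Subalgebra.toSubmodule (integralClosure A L)

/-- The antitrace `ATr(x) = x - σ(x)` as an `A`-linear map on `L`. -/
def antitrace (A M L : Type) [CommRing A] [Field M] [Field L] [Algebra A M]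
    [Algebra M L] [Algebra A L] [IsScalarTower A M L] (σ : L ≃ₐ[M] L) : L →ₗ[A] L :=
  (LinearMap.id - σ.toLinearMap).restrictScalars A

/-- With `𝒜 = ATr(O_L)`: `O_I = {x ∈ O_L : ATr(x) ∈ I·𝒜}`, and `𝒜` is a projective
`O_M`-module of rank `1`. -/
theorem order_eq_antitrace_preimage (A M L : Type) [CommRing A] [IsDedekindDomain A]
    [Field M] [Field L] [Algebra A M] [IsFractionRing A M]
    [Algebra M L] [Algebra A L] [IsScalarTower A M L]
    (h2 : Module.finrank M L = 2)
    [IsDedekindDomain (integralClosure A L)]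
    [Module.Finite A (integralClosure A L)]
    (σ : L ≃ₐ[M] L) (hσ : σ ≠ AlgEquiv.refl)
    (hgal : ∀ τ : L ≃ₐ[M] L, τ = AlgEquiv.refl ∨ τ = σ) :
    (∀ I : Ideal A, I ≠ ⊥ → ∀ x : L,
      (x ∈ orderOfIdeal A L I ↔ x ∈ integralClosure A L ∧
        antitrace A M L σ x ∈
          I • Submodule.map (antitrace A M L σ)
            (Subalgebra.toSubmodule (integralClosure A L)))) ∧
    Module.Projective A
      ↥(Submodule.map (antitrace A M L σ) (Subalgebra.toSubmodule (integralClosure A L))) ∧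
    Module.rank A
      ↥(Submodule.map (antitrace A M L σ) (Subalgebra.toSubmodule (integralClosure A L))) = 1 := by
  classical
  set OL := Subalgebra.toSubmodule (integralClosure A L) with hOL
  set T := antitrace A M L σ with hT
  have hTdef : ∀ x : L, T x = x - σ x := fun x => rfl
  set 𝒜 := Submodule.map T OL with h𝒜
  have hML : Function.Injective (algebraMap M L) := (algebraMap M L).injective
  have hAM : Function.Injective (algebraMap A M) := IsFractionRing.injective A M
  have hAL : Function.Injective (algebraMap A L) := by
    rw [IsScalarTower.algebraMap_eq A M L]
    exact hML.comp hAM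
  have hfin : FiniteDimensional M L := FiniteDimensional.of_finrank_eq_succ (n := 1) h2
  have hgalois : IsGalois M L := by
    apply IsGalois.of_card_aut_eq_finrank (F := M) (E := L)
    rw [h2, Nat.card_eq_two_iff]
    refine ⟨AlgEquiv.refl, σ, Ne.symm hσ, ?_⟩
    ext τ
    simp only [Set.mem_insert_iff, Set.mem_singleton_iff, Set.mem_univ, iff_true]
    rcases hgal τ with h | h
    · exact Or.inl h
    · exact Or.inr h
  have hfix : ∀ z : L, σ z = z → ∃ m : M, algebraMap M L m = z := by
    intro z hz
    have hmem : z ∈ IntermediateField.fixedField (⊤ : Subgroup (L ≃ₐ[M] L)) := by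
      intro g
      rcases hgal g.1 with h | h
      · show g.1 z = z
        rw [h]
        rfl
      · show g.1 z = z
        rw [h]
        exact hz
    have hbot : IntermediateField.fixedField (⊤ : Subgroup (L ≃ₐ[M] L)) = ⊥ := by
      rw [← IntermediateField.fixingSubgroup_bot, IsGalois.fixedField_fixingSubgroup]
    rw [hbot, IntermediateField.mem_bot] at hmem
    exact hmem
  have hσ2 : ∀ z : L, σ (σ z) = z := by
    rcases hgal (σ.trans σ) with h | h
    · intro z
      have := AlgEquiv.ext_iff.mp h z
      simpa using this
    · exfalso
      apply hσ
      ext z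
      have := AlgEquiv.ext_iff.mp h z
      simpa using σ.injective (by simpa using this)
  have hfixA : ∀ a : A, σ (algebraMap A L a) = algebraMap A L a := by
    intro a
    rw [IsScalarTower.algebraMap_apply A M L, AlgEquiv.commutes]
  have hTzero : ∀ a : A, T (algebraMap A L a) = 0 := by
    intro a
    rw [hTdef, hfixA, sub_self]
  have hanti : ∀ x : L, σ (T x) = -(T x) := by
    intro x
    rw [hTdef, map_sub, hσ2]
    ring
  -- Part 1
  have part1 : ∀ I : Ideal A, I ≠ ⊥ → ∀ x : L,
      (x ∈ orderOfIdeal A L I ↔ x ∈ integralClosure A L ∧ T x ∈ I • 𝒜) := by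
    intro I _ x
    constructor
    · intro hx
      obtain ⟨b, hb, c, hc, rfl⟩ := Submodule.mem_sup.mp hx
      rw [Subalgebra.mem_toSubmodule, Algebra.mem_bot] at hb
      obtain ⟨a, rfl⟩ := hb
      have hcOL : c ∈ OL := Submodule.smul_le_right hc
      rw [Subalgebra.mem_toSubmodule] at hcOL
      constructor
      · exact add_mem (isIntegral_algebraMap) hcOL
      · rw [map_add, hTzero, zero_add]
        have hmem : T c ∈ Submodule.map T (I • OL) := Submodule.mem_map_of_mem hc
        rwa [Submodule.map_smul''] at hmem
    · rintro ⟨hxint, hxtr⟩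
      rw [h𝒜, ← Submodule.map_smul''] at hxtr
      obtain ⟨y, hy, hTy⟩ := hxtr
      have hyOL : y ∈ OL := Submodule.smul_le_right hy
      rw [Subalgebra.mem_toSubmodule] at hyOL
      have hfixxy : σ (x - y) = x - y := by
        have hz : T (x - y) = 0 := by rw [map_sub, hTy, sub_self]
        rw [hTdef] at hz
        exact (sub_eq_zero.mp hz).symm
      obtain ⟨m, hm⟩ := hfix (x - y) hfixxy
      have hint : IsIntegral A (x - y) := IsIntegral.sub hxint hyOL
      have hmint : IsIntegral A m := by
        rw [← isIntegral_algebraMap_iff hML, hm]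
        exact hint
      obtain ⟨a, ha⟩ := IsIntegrallyClosed.isIntegral_iff.mp hmint
      refine Submodule.mem_sup.mpr ⟨x - y, ?_, y, hy, by ring⟩
      rw [Subalgebra.mem_toSubmodule, Algebra.mem_bot]
      exact ⟨a, by rw [IsScalarTower.algebraMap_apply A M L, ha, hm]⟩
  -- nonzero element of 𝒜
  obtain ⟨y, hy⟩ : ∃ y : L, σ y ≠ y := by
    by_contra h
    push_neg at h
    exact hσ (AlgEquiv.ext fun z => h z)
  have halg : IsAlgebraic A y := (IsFractionRing.isAlgebraic_iff A M L).mpr (.of_finite M y)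
  obtain ⟨x0, c, hc0, hcx⟩ : ∃ x0 : integralClosure A L, ∃ c : A, c ≠ 0 ∧
      algebraMap A L c * y = x0 := by
    obtain ⟨c, hc0, hcint⟩ := halg.exists_integral_multiple
    exact ⟨⟨c • y, hcint⟩, c, hc0, (Algebra.smul_def c y).symm⟩
  set w := T (algebraMap A L c * y) with hwdef
  have hcL : algebraMap A L c ≠ 0 := fun h => hc0 (hAL (by rw [h, map_zero]))
  have hw0 : w ≠ 0 := by
    rw [hwdef, hTdef, map_mul, hfixA]
    intro h
    have : algebraMap A L c * (y - σ y) = 0 := by rw [← h]; ring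
    rcases mul_eq_zero.mp this with h' | h'
    · exact hcL h'
    · exact hy (sub_eq_zero.mp h').symm
  have hwmem : w ∈ 𝒜 := by
    have hmem : algebraMap A L c * y ∈ OL := by
      rw [hOL, Subalgebra.mem_toSubmodule, hcx]
      exact x0.2
    exact Submodule.mem_map_of_mem hmem
  -- every element of 𝒜 is an M-multiple of w
  have hdiv : ∀ u : L, u ∈ 𝒜 → ∃ m : M, algebraMap M L m * w = u := by
    rintro u ⟨xu, _, rfl⟩
    have h1 : σ (T xu / w) = T xu / w := by
      rw [map_div₀, hanti, hanti, neg_div_neg_eq]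
    obtain ⟨m, hm⟩ := hfix _ h1
    exact ⟨m, by rw [hm]; field_simp⟩
  set mcoef : ↥𝒜 → M := fun u => Classical.choose (hdiv u u.2) with hmc
  have key : ∀ u : ↥𝒜, algebraMap M L (mcoef u) * w = (u : L) :=
    fun u => Classical.choose_spec (hdiv u u.2)
  have uniq : ∀ m m' : M, algebraMap M L m * w = algebraMap M L m' * w → m = m' := by
    intro m m' h
    exact hML (mul_right_cancel₀ hw0 h)
  set φ : ↥𝒜 →ₗ[A] M :=
    { toFun := mcoef
      map_add' := by
        intro u v
        apply uniq
        rw [key, map_add, add_mul, key, key]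
        rfl
      map_smul' := by
        intro a u
        apply uniq
        rw [key]
        rw [RingHom.id_apply, Algebra.smul_def, map_mul, mul_assoc, key,
          ← IsScalarTower.algebraMap_apply A M L, ← Algebra.smul_def]
        rfl } with hφ
  have hφkey : ∀ u : ↥𝒜, algebraMap M L (φ u) * w = (u : L) := key
  have hinjφ : Function.Injective φ := by
    intro u v h
    apply Subtype.ext
    rw [← hφkey u, ← hφkey v, h]
  set N : Submodule A M := LinearMap.range φ with hN
  have hequiv : ↥𝒜 ≃ₗ[A] ↥N := LinearEquiv.ofInjective φ hinjφ
  have hOLfg : OL.FG := by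
    rw [hOL, ← Submodule.fg_top]
    exact (inferInstance : Module.Finite A ↥(integralClosure A L)).fg_top
  have h𝒜fg : 𝒜.FG := hOLfg.map T
  have hNfg : N.FG := by
    have hfin𝒜 : Module.Finite A ↥𝒜 := by
      rw [Module.finite_def, Submodule.fg_top]
      exact h𝒜fg
    rw [hN, LinearMap.range_eq_map]
    exact (Submodule.fg_top (𝒜)).mpr h𝒜fg |>.map φ
  have hNne : N ≠ ⊥ := by
    intro h
    have hmem : φ ⟨w, hwmem⟩ ∈ N := LinearMap.mem_range_self φ _
    rw [h, Submodule.mem_bot] at hmem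
    apply hw0
    have hk := hφkey ⟨w, hwmem⟩
    rw [hmem, map_zero, zero_mul] at hk
    exact hk.symm
  refine ⟨part1, ?_, ?_⟩
  · have := projective_of_fg N hNfg hNne
    exact Module.Projective.of_equiv hequiv.symm
  · rw [hequiv.rank_eq]
    exact rank_eq_one_of_ne_bot N hNne
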